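/- Let A = (A; f) be a finite monounary algebra and C = Clo(A). Then the relational structure ⟨A;C•⟩ is polymorphism-homogeneous if and only if f is either bijective or constant. -/

import Mathlib

/- Common framework: operations, relations, clones, preservation,
   primitive positive definability, polymorphism-homogeneity. -/

namespace PaperPH

/-- `Op A n` is the set of `n`-ary operations on `A`. -/
abbrev Op (A : Type*) (n : ℕ) := (Fin n → A) → A

/-- A family of operations on `A`, sorted by arity. -/
abbrev OpFamily (A : Type*) := ∀ n : ℕ, Set (Op A n)

/-- A family of relations on `A`, sorted by arity. -/
abbrev RelFamily (A : Type*) := ∀ n : ℕ, Set (Set (Fin n → A))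

variable {A : Type*}

/-- The `k`-ary partial operation given by the total map `h` together with domain `D`
preserves the `n`-ary relation `ρ`: for every `n × k` matrix all of whose rows lie in `D`
and all of whose columns lie in `ρ`, applying `h` to the rows yields a tuple in `ρ`. -/
def pPreserves {k n : ℕ} (D : Set (Fin k → A)) (h : Op A k) (ρ : Set (Fin n → A)) : Prop :=
  ∀ M : Fin n → Fin k → A,
    (∀ i, M i ∈ D) → (∀ j, (fun i => M i j) ∈ ρ) → (fun i => h (M i)) ∈ ρ

/-- `h` (with domain `D`) preserves every relation of the family `R`. -/
def pPreservesAll {k : ℕ} (D : Set (Fin k → A)) (h : Op A k) (R : RelFamily A) : Prop :=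
  ∀ n, ∀ ρ ∈ R n, pPreserves D h ρ

/-- The relational structure `⟨A; R⟩` is polymorphism-homogeneous: for every `k ≥ 1`,
every partial operation preserving all relations of `R` extends to a total operation
preserving all relations of `R`. -/
def RelPolyHom (R : RelFamily A) : Prop :=
  ∀ k, 1 ≤ k → ∀ (D : Set (Fin k → A)) (h : Op A k), pPreservesAll D h R →
    ∃ g : Op A k, (∀ x ∈ D, g x = h x) ∧ pPreservesAll Set.univ g R

/-- A family of operations is a clone if it contains all projections and is closed
under composition. -/
def IsClone (C : OpFamily A) : Prop :=
  (∀ (n : ℕ) (i : Fin n), (fun x => x i) ∈ C n) ∧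
  (∀ (n k : ℕ) (f : Op A n) (g : Fin n → Op A k),
    f ∈ C n → (∀ i, g i ∈ C k) → (fun x => f (fun i => g i x)) ∈ C k)

/-- The clone generated by a family `F` of operations; for an algebra with basic
operations `F` this is its clone `Clo(A)` of term operations. -/
def CloGen (F : OpFamily A) : OpFamily A :=
  fun n => { f | ∀ C : OpFamily A, IsClone C → (∀ m, F m ⊆ C m) → f ∈ C n }

/-- The graph `f•` of an `n`-ary operation `f`: the solution set of
`f(x_1,…,x_n) = x_{n+1}`. -/
def graphRel {n : ℕ} (f : Op A n) : Set (Fin (n + 1) → A) :=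
  { a | f (fun i => a i.castSucc) = a (Fin.last n) }

/-- `C•`: the family of graphs of the operations in `C`. -/
def Cdot (C : OpFamily A) : RelFamily A := fun m =>
  match m with
  | 0 => ∅
  | n + 1 => { ρ | ∃ f ∈ C n, ρ = graphRel f }

/-- `C°`: the family of solution sets `Sol(f,g) = {a | f(a) = g(a)}` of equations
between members of `C` of the same arity. -/
def Ccirc (C : OpFamily A) : RelFamily A := fun n =>
  { ρ | ∃ f ∈ C n, ∃ g ∈ C n, ρ = { a | f a = g a } }

/-- `Pol R`: all total operations preserving every relation in `R`. -/
def PolOps (R : RelFamily A) : OpFamily A := fun k =>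
  { h | pPreservesAll Set.univ h R }

/-- `Inv F`: all relations preserved by every operation in `F`. -/
def InvRels (F : OpFamily A) : RelFamily A := fun n =>
  { ρ | ∀ k, 1 ≤ k → ∀ h ∈ F k, pPreserves (Set.univ : Set (Fin k → A)) h ρ }

/-- `⟨R⟩_∄`: the relations definable by quantifier-free primitive positive formulas
over `R`, i.e. by conjunctions of atomic formulas `τ_i(x_{σ_i(1)},…,x_{σ_i(r_i)})`
with `τ_i ∈ R`. -/
def qfDef (R : RelFamily A) : RelFamily A := fun n =>
  { ρ | ∃ (t : ℕ) (r : Fin t → ℕ) (τ : ∀ i : Fin t, Set (Fin (r i) → A))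
      (σ : ∀ i : Fin t, Fin (r i) → Fin n),
      (∀ i, τ i ∈ R (r i)) ∧
      ρ = { a | ∀ i, (fun j => a (σ i j)) ∈ τ i } }

/-- `⟨R⟩_∃`: the relations definable by primitive positive formulas over `R`
(existentially quantified conjunctions of atomic formulas over `R`). -/
def ppDef (R : RelFamily A) : RelFamily A := fun n =>
  { ρ | ∃ (m t : ℕ) (r : Fin t → ℕ) (τ : ∀ i : Fin t, Set (Fin (r i) → A))
      (σ : ∀ i : Fin t, Fin (r i) → Fin (n + m)),
      (∀ i, τ i ∈ R (r i)) ∧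
      ρ = { a | ∃ b : Fin m → A, ∀ i, (fun j => Fin.append a b (σ i j)) ∈ τ i } }

/-- `B ⊆ A^k` is closed under the componentwise action of the operations in `C`,
i.e. `B` is a subalgebra (possibly empty) of the `k`-th power. -/
def ClosedUnder (C : OpFamily A) (k : ℕ) (B : Set (Fin k → A)) : Prop :=
  ∀ n, ∀ f ∈ C n, ∀ M : Fin n → Fin k → A,
    (∀ i, M i ∈ B) → (fun j => f (fun i => M i j)) ∈ B

/-- `h` is a homomorphism from the subalgebra `B ≤ A^k` to `A` (w.r.t. the
operations in `C`): it commutes with the componentwise action on tuples from `B`. -/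
def IsHomOn (C : OpFamily A) {k : ℕ} (B : Set (Fin k → A)) (h : Op A k) : Prop :=
  ∀ n, ∀ f ∈ C n, ∀ M : Fin n → Fin k → A, (∀ i, M i ∈ B) →
    h (fun j => f (fun i => M i j)) = f (fun i => h (M i))

/-- The algebra with clone of term operations `C` is polymorphism-homogeneous:
for every `k ≥ 1`, every homomorphism from a subalgebra of `A^k` to `A` extends
to a homomorphism `A^k → A`. -/
def AlgPolyHom (C : OpFamily A) : Prop :=
  ∀ k, 1 ≤ k → ∀ B : Set (Fin k → A), ClosedUnder C k B →
    ∀ h : Op A k, IsHomOn C B h →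
      ∃ g : Op A k, (∀ x ∈ B, g x = h x) ∧ IsHomOn C Set.univ g

/-- The algebra with clone of term operations `C` is homomorphism-homogeneous:
every homomorphism from a subalgebra of `A` to `A` extends to an endomorphism of `A`. -/
def AlgHomHom (C : OpFamily A) : Prop :=
  ∀ B : Set (Fin 1 → A), ClosedUnder C 1 B →
    ∀ h : Op A 1, IsHomOn C B h →
      ∃ g : Op A 1, (∀ x ∈ B, g x = h x) ∧ IsHomOn C Set.univ g

/-- Property (SDC): the algebraic sets (solution sets of systems of equations, i.e.
the quantifier-free pp definable relations over `C°`) are exactly the relations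
closed under the centralizer `C* = Pol C•`. -/
def SDC (C : OpFamily A) : Prop :=
  ∀ n, 1 ≤ n → qfDef (Ccirc C) n = InvRels (PolOps (Cdot C)) n

/-- The subalgebra of `A^k` generated by `S` (w.r.t. the operations of `C`). -/
def Gen (C : OpFamily A) (k : ℕ) (S : Set (Fin k → A)) : Set (Fin k → A) :=
  ⋂₀ { B | ClosedUnder C k B ∧ S ⊆ B }

/-- The algebra with clone of term operations `C` is injective in `SP_fin(A)`,
the class of subalgebras of finite direct powers of `A`: every homomorphism from
a subalgebra `B ≤ B' ≤ A^m` to `A` extends to a homomorphism `B' → A`. -/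
def InjSPfin (C : OpFamily A) : Prop :=
  ∀ m, 1 ≤ m → ∀ B B' : Set (Fin m → A), ClosedUnder C m B → ClosedUnder C m B' → B ⊆ B' →
    ∀ h : Op A m, IsHomOn C B h →
      ∃ g : Op A m, (∀ x ∈ B, g x = h x) ∧ IsHomOn C B' g

end PaperPH

open PaperPH

namespace PaperPH

/-- The basic operations of a monounary algebra `(A; f)`: the single unary
operation `f`. -/
def unOps (A : Type*) (f : A → A) : OpFamily A := fun n =>
  match n with
  | 1 => ({ fun x => f (x 0) } : Set (Op A 1))
  | _ => ∅

/-- An element `a` of a monounary algebra `(A; f)` is cyclic if `f^[k] a = a`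
for some `k ≥ 1`. -/
def IsCyclicElem {A : Type*} (f : A → A) (a : A) : Prop :=
  ∃ k : ℕ, 1 ≤ k ∧ f^[k] a = a

/-- The height of an element `a` of a finite monounary algebra `(A; f)`: the least
nonnegative integer `m` such that `f^[m] a` is cyclic. -/
noncomputable def height {A : Type*} (f : A → A) (a : A) : ℕ :=
  sInf { m : ℕ | IsCyclicElem f (f^[m] a) }

/-- The monounary algebra `(B; fB)` belongs to `HSP(A; f)`, the variety generated by
`(A; f)` (signature with one unary operation symbol): it is a homomorphic image of a
subalgebra of a direct power of `(A; f)`. -/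
def InHSPun.{u, v} (A : Type u) (f : A → A) (B : Type v) (fB : B → B) : Prop :=
  ∃ (I : Type v) (S : Set (I → A)) (π : (I → A) → B),
    (∀ x ∈ S, (fun i => f (x i)) ∈ S) ∧
    (∀ x ∈ S, π (fun i => f (x i)) = fB (π x)) ∧
    (∀ b : B, ∃ x ∈ S, π x = b)

/-- The monounary algebra `(A; f)` is injective in the variety `HSP(A; f)`: for
members `B ≤ C` of the variety, every homomorphism `B → A` extends to a
homomorphism `C → A`. -/
def InjHSPun.{u, v} (A : Type u) (f : A → A) : Prop :=
  ∀ (B : Type v) (fB : B → B), InHSPun A f B fB →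
    ∀ S : Set B, (∀ x ∈ S, fB x ∈ S) →
      ∀ h : B → A, (∀ x ∈ S, h (fB x) = f (h x)) →
        ∃ g : B → A, (∀ x ∈ S, g x = h x) ∧ ∀ x : B, g (fB x) = f (g x)

end PaperPH
section Helpers
open PaperPH

variable {A : Type*} {f : A → A}

/-- The essential condition: the partial operation `h` with domain `D` commutes with
iterates of `f` inside `D`. -/
def Qc (f : A → A) {k : ℕ} (D : Set (Fin k → A)) (h : Op A k) : Prop :=
  ∀ (m : ℕ) (x y : Fin k → A), x ∈ D → y ∈ D →
    (fun j => f^[m] (x j)) = y → f^[m] (h x) = h y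

lemma mem_cloGen (f : A → A) (m : ℕ) {n : ℕ} (i : Fin n) :
    (fun x : Fin n → A => f^[m] (x i)) ∈ CloGen (unOps A f) n := by
  intro C hC hsub
  induction m with
  | zero => simpa using hC.1 n i
  | succ m ih =>
    have hf : (fun x : Fin 1 → A => f (x 0)) ∈ C 1 := hsub 1 rfl
    have hcomp := hC.2 1 n (fun x : Fin 1 → A => f (x 0))
      (fun _ => fun x : Fin n → A => f^[m] (x i)) hf (fun _ => ih)
    simpa [Function.iterate_succ_apply'] using hcomp

lemma cloGen_sub {n : ℕ} {g : Op A n} (hg : g ∈ CloGen (unOps A f) n) :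
    ∃ (m : ℕ) (i : Fin n), g = fun x => f^[m] (x i) := by
  refine hg (fun n => {g | ∃ (m : ℕ) (i : Fin n), g = fun x => f^[m] (x i)}) ⟨?_, ?_⟩ ?_
  · intro n i
    exact ⟨0, i, by funext x; simp⟩
  · rintro n k F G ⟨m, i, rfl⟩ hG
    obtain ⟨m', j, hj⟩ := hG i
    exact ⟨m + m', j, by funext x; simp [hj, Function.iterate_add_apply]⟩
  · intro m'
    match m' with
    | 0 => exact fun g h => h.elim
    | 1 =>
      rintro g hg
      replace hg : g = fun x : Fin 1 → A => f (x 0) := hg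
      exact ⟨1, 0, by rw [hg]; funext x; simp⟩
    | (n + 2) => exact fun g h => h.elim

lemma q_of_preserves {k : ℕ} {D : Set (Fin k → A)} {h : Op A k}
    (hp : pPreservesAll D h (Cdot (CloGen (unOps A f)))) : Qc f D h := by
  intro m x y hx hy hxy
  have hρ : graphRel (fun z : Fin 1 → A => f^[m] (z 0)) ∈ Cdot (CloGen (unOps A f)) 2 :=
    ⟨_, mem_cloGen f m 0, rfl⟩
  have hne : ((0 : Fin 1).castSucc) ≠ Fin.last 1 := by decide
  set M : Fin 2 → Fin k → A := fun i' => if i' = Fin.last 1 then y else x with hM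
  have hres := hp 2 _ hρ M
    (by
      intro i'
      by_cases h' : i' = Fin.last 1
      · simpa [hM, h'] using hy
      · simp only [hM, if_neg h']; exact hx)
    (by
      intro j
      show f^[m] ((fun i' => M i' j) ((0 : Fin 1).castSucc)) = (fun i' => M i' j) (Fin.last 1)
      simp only [hM, if_neg hne, if_pos rfl]
      exact congrFun hxy j)
  have hres2 : f^[m] (h (M ((0 : Fin 1).castSucc))) = h (M (Fin.last 1)) := hres
  simpa [hM, if_neg hne] using hres2

lemma preserves_of_q {k : ℕ} {D : Set (Fin k → A)} {h : Op A k}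
    (hq : Qc f D h) : pPreservesAll D h (Cdot (CloGen (unOps A f))) := by
  intro n ρ hρ
  match n, ρ, hρ with
  | 0, ρ, hρ => exact hρ.elim
  | (n + 1), ρ, hρ =>
    obtain ⟨g, hg, rfl⟩ := hρ
    obtain ⟨m, i, rfl⟩ := cloGen_sub hg
    intro M hM hcol
    have hcol' : (fun j => f^[m] (M i.castSucc j)) = M (Fin.last n) := by
      funext j
      exact hcol j
    exact hq m (M i.castSucc) (M (Fin.last n)) (hM _) (hM _) hcol'

lemma q_univ_of_hom {k : ℕ} {g : Op A k}
    (hg1 : ∀ x, g (fun j => f (x j)) = f (g x)) : Qc f (Set.univ : Set (Fin k → A)) g := by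
  have hg2 : ∀ (m : ℕ) (x : Fin k → A), f^[m] (g x) = g (fun j => f^[m] (x j)) := by
    intro m
    induction m with
    | zero => intro x; simp
    | succ m ih =>
      intro x
      rw [Function.iterate_succ_apply, ← hg1 x, ih (fun j => f (x j))]
      simp [Function.iterate_succ_apply]
  intro m x y _ _ heq
  rw [← heq, hg2]

lemma const_extend {c : A} (hc : ∀ x, f x = c)
    {k : ℕ} {D : Set (Fin k → A)} {h : Op A k} (hq : Qc f D h) :
    ∃ g : Op A k, (∀ x ∈ D, g x = h x) ∧ Qc f Set.univ g := by
  classical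
  refine ⟨fun x => if x ∈ D then h x else c, fun x hx => if_pos hx, ?_⟩
  have hiter : ∀ (m : ℕ) (z : A), f^[m + 1] z = c := by
    intro m z
    rw [Function.iterate_succ_apply', hc]
  apply q_univ_of_hom
  intro x
  have h1 : (fun j => f (x j)) = (fun _ => c) := by funext j; exact hc (x j)
  rw [h1]
  by_cases hD : (fun _ : Fin k => c) ∈ D
  · rw [if_pos hD]
    have := hq 1 (fun _ => c) (fun _ => c) hD hD (by funext j; simp [hc])
    simp only [Function.iterate_one, hc] at this
    rw [← this, hc]
  · rw [if_neg hD]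
    rw [hc]

lemma bij_extend [Finite A] (hbij : Function.Bijective f)
    {k : ℕ} (hk : 1 ≤ k) {D : Set (Fin k → A)} {h : Op A k}
    (hq : Qc f D h) :
    ∃ g : Op A k, (∀ x ∈ D, g x = h x) ∧ Qc f Set.univ g := by
  classical
  -- f has finite order
  obtain ⟨N, hN1, hNid⟩ : ∃ N, 1 ≤ N ∧ ∀ z : A, f^[N] z = z := by
    obtain ⟨i, j, hij, hfij⟩ := Finite.exists_ne_map_eq_of_infinite (fun n : ℕ => f^[n])
    rcases hij.lt_or_gt with hlt | hlt
    · refine ⟨j - i, by omega, fun z => ?_⟩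
      have h1 : f^[i] (f^[j - i] z) = f^[i] z := by
        rw [← Function.iterate_add_apply]
        rw [show i + (j - i) = j by omega]
        exact congrFun hfij.symm z
      exact hbij.injective.iterate i h1
    · refine ⟨i - j, by omega, fun z => ?_⟩
      have h1 : f^[j] (f^[i - j] z) = f^[j] z := by
        rw [← Function.iterate_add_apply]
        rw [show j + (i - j) = i by omega]
        exact congrFun hfij z
      exact hbij.injective.iterate j h1
  have hmulN : ∀ (m : ℕ) (z : A), f^[m * N] z = z := by
    intro m
    induction m with
    | zero => intro z; simp
    | succ m ih =>
      intro z
      rw [Nat.succ_mul, Function.iterate_add_apply]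
      rw [hNid z, ih z]
  -- the orbit equivalence relation
  set r : (Fin k → A) → (Fin k → A) → Prop :=
    fun x y => ∃ m : ℕ, (fun j => f^[m] (x j)) = y with hr
  have hrefl : ∀ x, r x x := fun x => ⟨0, by funext j; simp⟩
  have hsymm : ∀ {x y}, r x y → r y x := by
    rintro x y ⟨m, rfl⟩
    refine ⟨m * (N - 1), ?_⟩
    funext j
    rw [← Function.iterate_add_apply]
    rw [show m * (N - 1) + m = m * N by rw [← Nat.mul_succ]; congr 1; omega]
    exact hmulN m (x j)
  have htrans : ∀ {x y z}, r x y → r y z → r x z := by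
    rintro x y z ⟨m, rfl⟩ ⟨m', rfl⟩
    refine ⟨m' + m, ?_⟩
    funext j
    rw [Function.iterate_add_apply]
  let s : Setoid (Fin k → A) := ⟨r, ⟨hrefl, hsymm, htrans⟩⟩
  set i0 : Fin k := ⟨0, hk⟩ with hi0
  -- choice of representatives with base values
  have key : ∀ q : Quotient s, ∃ (p : Fin k → A) (b : A),
      Quotient.mk s p = q ∧
      (∀ m : ℕ, (fun j => f^[m] (p j)) ∈ D → f^[m] b = h (fun j => f^[m] (p j))) ∧
      (∀ a c : ℕ, (fun j => f^[a] (p j)) = (fun j => f^[c] (p j)) → f^[a] b = f^[c] b) := by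
    intro q
    obtain ⟨x, rfl⟩ := q.exists_rep
    by_cases hmeets : ∃ p ∈ D, r p x
    · obtain ⟨p, hpD, hpx⟩ := hmeets
      have haux : ∀ a c : ℕ, c ≤ a →
          (fun j => f^[a] (p j)) = (fun j => f^[c] (p j)) → f^[a] (h p) = f^[c] (h p) := by
        intro a c hca hac
        have h1 : ∀ j, f^[a - c] (p j) = p j := by
          intro j
          have h2 : f^[c] (f^[a - c] (p j)) = f^[c] (p j) := by
            rw [← Function.iterate_add_apply]
            rw [show c + (a - c) = a by omega]
            exact congrFun hac j
          exact hbij.injective.iterate c h2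
        have h3 := hq (a - c) p p hpD hpD (funext h1)
        calc f^[a] (h p) = f^[c + (a - c)] (h p) := by rw [show c + (a-c) = a by omega]
          _ = f^[c] (f^[a - c] (h p)) := Function.iterate_add_apply f c (a - c) (h p)
          _ = f^[c] (h p) := by rw [h3]
      refine ⟨p, h p, Quotient.sound hpx, ?_, ?_⟩
      · intro m hm
        exact hq m p _ hpD hm rfl
      · intro a c hac
        rcases le_total c a with hca | hca
        · exact haux a c hca hac
        · exact (haux c a hca hac.symm).symm
    · refine ⟨x, x i0, rfl, ?_, ?_⟩
      · intro m hm
        exact absurd ⟨_, hm, hsymm ⟨m, rfl⟩⟩ hmeets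
      · intro a c hac
        exact congrFun hac i0
  choose p b hpq hinv hper using key
  have hrep : ∀ x : Fin k → A, ∃ m : ℕ,
      (fun j => f^[m] (p (Quotient.mk s x) j)) = x :=
    fun x => Quotient.exact (hpq (Quotient.mk s x))
  set g : Op A k := fun x => f^[Classical.choose (hrep x)] (b (Quotient.mk s x)) with hgdef
  have hG : ∀ (x : Fin k → A) (m : ℕ),
      (fun j => f^[m] (p (Quotient.mk s x) j)) = x → g x = f^[m] (b (Quotient.mk s x)) := by
    intro x m hm
    exact hper (Quotient.mk s x) (Classical.choose (hrep x)) m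
      ((Classical.choose_spec (hrep x)).trans hm.symm)
  refine ⟨g, ?_, ?_⟩
  · intro x hx
    obtain ⟨m, hm⟩ := hrep x
    rw [hG x m hm, hinv (Quotient.mk s x) m (by rw [hm]; exact hx), hm]
  · apply q_univ_of_hom
    intro x
    have hqq : Quotient.mk s (fun j => f (x j)) = Quotient.mk s x :=
      Quotient.sound (hsymm ⟨1, by funext j; simp⟩)
    obtain ⟨m, hm⟩ := hrep x
    have hm1 : (fun j => f^[m + 1] (p (Quotient.mk s (fun j => f (x j))) j))
        = (fun j => f (x j)) := by
      rw [hqq]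
      funext j
      rw [Function.iterate_succ_apply', congrFun hm j]
    rw [hG _ _ hm1, hqq, Function.iterate_succ_apply', hG x m hm]
end Helpers

/-- For a finite monounary algebra `(A; f)` with clone of term
operations `C`, the relational structure `⟨A;C•⟩` is polymorphism-homogeneous iff
`f` is either bijective or constant. -/
theorem monounary_Cdot_polyHom_iff (A : Type*) [Fintype A] (f : A → A)
    (C : OpFamily A) (hC : C = CloGen (unOps A f)) :
    RelPolyHom (Cdot C) ↔ (Function.Bijective f ∨ ∃ c : A, ∀ x : A, f x = c) := by
  classical
  subst hC
  constructor
  · intro hPH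
    by_contra hcon
    push_neg at hcon
    obtain ⟨hnbij, hnconst⟩ := hcon
    -- f is not injective
    have hninj : ¬ Function.Injective f := fun hinj =>
      hnbij ((Finite.injective_iff_bijective).mp hinj)
    have hnsurj : ¬ Function.Surjective f := fun hsurj =>
      hnbij ((Finite.surjective_iff_bijective).mp hsurj)
    obtain ⟨a, b, hfab, hab⟩ : ∃ a b : A, f a = f b ∧ a ≠ b := by
      rw [Function.Injective] at hninj
      push_neg at hninj
      obtain ⟨a, b, h1, h2⟩ := hninj
      exact ⟨a, b, h1, h2⟩
    obtain ⟨d, hd⟩ : ∃ d : A, ∀ z : A, f z ≠ d := by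
      rw [Function.Surjective] at hnsurj
      push_neg at hnsurj
      obtain ⟨d, hd⟩ := hnsurj
      exact ⟨d, fun z hz => hd z hz⟩
    obtain ⟨v₁, hv⟩ : ∃ v₁ : A, f v₁ ≠ f a := hnconst (f a)
    set x₁ : Fin 2 → A := fun i => if i.val = 0 then d else a with hx₁
    set x₂ : Fin 2 → A := fun i => if i.val = 0 then d else b with hx₂
    have hx12 : x₁ ≠ x₂ := by
      intro hcontra
      have := congrFun hcontra 1
      simp [hx₁, hx₂] at this
      exact hab this
    set D : Set (Fin 2 → A) := {x₁, x₂} with hD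
    set h : Op A 2 := fun w => if w = x₁ then v₁ else a with hh
    have hfirst : ∀ x ∈ D, x 0 = d := by
      rintro x (rfl | rfl) <;> simp [hx₁, hx₂]
    have hqdh : Qc f D h := by
      intro m x y hx hy heq
      match m with
      | 0 =>
        have : x = y := by funext j; simpa using congrFun heq j
        rw [this]
        simp
      | (m + 1) =>
        exfalso
        have h1 : f^[m + 1] (x 0) = y 0 := congrFun heq 0
        rw [hfirst x hx, hfirst y hy, Function.iterate_succ_apply'] at h1
        exact hd _ h1
    obtain ⟨g, hgext, hgp⟩ := hPH 2 (by norm_num) D h (preserves_of_q hqdh)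
    have hqg : Qc f (Set.univ : Set (Fin 2 → A)) g := q_of_preserves hgp
    have hfx : (fun j => f (x₁ j)) = (fun j => f (x₂ j)) := by
      funext j
      fin_cases j <;> simp [hx₁, hx₂, hfab]
    have h1 : f (g x₁) = g (fun j => f (x₁ j)) := by
      have := hqg 1 x₁ (fun j => f (x₁ j)) trivial trivial (by funext j; simp)
      simpa using this
    have h2 : f (g x₂) = g (fun j => f (x₂ j)) := by
      have := hqg 1 x₂ (fun j => f (x₂ j)) trivial trivial (by funext j; simp)
      simpa using this
    have hg1 : g x₁ = v₁ := by
      rw [hgext x₁ (Or.inl rfl), hh]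
      simp
    have hg2 : g x₂ = a := by
      rw [hgext x₂ (Or.inr rfl), hh]
      simp [hx12.symm]
    rw [hg1] at h1
    rw [hg2, ← hfx, ← h1] at h2
    exact hv h2.symm
  · rintro (hbij | ⟨c, hc⟩) <;> intro k hk D h hp
    · obtain ⟨g, hgext, hgq⟩ := bij_extend hbij hk (q_of_preserves hp)
      exact ⟨g, hgext, preserves_of_q hgq⟩
    · obtain ⟨g, hgext, hgq⟩ := const_extend hc (q_of_preserves hp)
      exact ⟨g, hgext, preserves_of_q hgq⟩
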